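/- Let E be an exact category and let A and B be full subcategories closed under extensions. Suppose given exact functors p: E → A and q: E → B (for the induced exact structures on A and B) together with natural transformations whose component at each object x forms an exact sequence p(x) ↣ x ↠ q(x), such that the inclusion p(x) ↣ x is the counit of an adjunction between p and the inclusion of A, and the projection x ↠ q(x) is the unit of an adjunction between the inclusion of B and q. Let E(A, E, B) be the category whose objects are exact sequences a ↣ x ↠ b of E with a ∈ A and b ∈ B, and whose morphisms are commutative diagrams of such sequences. Then the functor e: E(A, E, B) → E sending (a ↣ x ↠ b) to x is an equivalence of categories. -/

import Mathlib

/-!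
Basic definitions: exact (∞-)categories à la Barwick (1-categorical formalization).
An exact structure on an additive category consists of two wide subcategories of
"inclusions" and "projections" subject to the axioms below.
-/

open CategoryTheory CategoryTheory.Limits

universe w v u v₂ u₂

namespace ExactPaper

variable {E : Type u} [Category.{v} E]

/-- `ι` is a kernel of `f`. -/
def IsKernelι [Preadditive E] {k x y : E} (ι : k ⟶ x) (f : x ⟶ y) : Prop :=
  ∃ w : ι ≫ f = 0, Nonempty (IsLimit (KernelFork.ofι ι w))

/-- `π` is a cokernel of `f`. -/
def IsCokernelπ [Preadditive E] {x y c : E} (f : x ⟶ y) (π : y ⟶ c) : Prop :=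
  ∃ w : f ≫ π = 0, Nonempty (IsColimit (CokernelCofork.ofπ π w))

/-- An exact structure on an additive category `E`: two wide subcategories of
inclusions (`↣`) and projections (`↠`) satisfying Barwick's axioms.  In the axiom
`exact_square`, the square has top edge `i : x ⟶ y`, left edge `p : x ⟶ x'`,
right edge `q : y ⟶ y'` and bottom edge `j : x' ⟶ y'`. -/
structure ExactStructure (E : Type u) [Category.{v} E] [Preadditive E] where
  /-- the class of inclusions -/
  IsIncl : ∀ ⦃x y : E⦄, (x ⟶ y) → Prop
  /-- the class of projections -/
  IsProj : ∀ ⦃x y : E⦄, (x ⟶ y) → Prop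
  incl_id : ∀ x : E, IsIncl (𝟙 x)
  incl_comp : ∀ {x y z : E} (f : x ⟶ y) (g : y ⟶ z), IsIncl f → IsIncl g → IsIncl (f ≫ g)
  proj_id : ∀ x : E, IsProj (𝟙 x)
  proj_comp : ∀ {x y z : E} (f : x ⟶ y) (g : y ⟶ z), IsProj f → IsProj g → IsProj (f ≫ g)
  incl_from_zero : ∀ {z x : E}, IsZero z → ∀ f : z ⟶ x, IsIncl f
  proj_to_zero : ∀ {x z : E}, IsZero z → ∀ f : x ⟶ z, IsProj f
  /-- pushouts of inclusions along arbitrary morphisms exist -/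
  pushout_incl : ∀ {x y x' : E} (i : x ⟶ y) (f : x ⟶ x'), IsIncl i →
    ∃ (y' : E) (g : y ⟶ y') (j : x' ⟶ y'), IsPushout i f g j
  /-- inclusions are stable under pushout -/
  incl_pushout_stable : ∀ {x y x' y' : E} {i : x ⟶ y} {f : x ⟶ x'} {g : y ⟶ y'} {j : x' ⟶ y'},
    IsPushout i f g j → IsIncl i → IsIncl j
  /-- pullbacks of projections along arbitrary morphisms exist -/
  pullback_proj : ∀ {y z z' : E} (p : y ⟶ z) (f : z' ⟶ z), IsProj p →
    ∃ (y' : E) (g : y' ⟶ y) (q : y' ⟶ z'), IsPullback g q p f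
  /-- projections are stable under pullback -/
  proj_pullback_stable : ∀ {y' z' y z : E} {g : y' ⟶ y} {q : y' ⟶ z'} {p : y ⟶ z} {f : z' ⟶ z},
    IsPullback g q p f → IsProj p → IsProj q
  /-- compatibility: the pushout and pullback descriptions of exact squares agree -/
  exact_square : ∀ {x y x' y' : E} (i : x ⟶ y) (p : x ⟶ x') (q : y ⟶ y') (j : x' ⟶ y'),
    i ≫ q = p ≫ j →
    ((IsIncl i ∧ IsProj p ∧ IsPushout i p q j) ↔ (IsIncl j ∧ IsProj q ∧ IsPullback i p q j))

/-- An exact sequence `x ↣ y ↠ z`: an inclusion which is a kernel of a projection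
which is in turn a cokernel of the inclusion. -/
def IsExactSeq [Preadditive E] (S : ExactStructure E) {x y z : E} (i : x ⟶ y) (p : y ⟶ z) :
    Prop :=
  S.IsIncl i ∧ S.IsProj p ∧ IsKernelι i p ∧ IsCokernelπ i p

end ExactPaper

namespace ExactPaper

variable {E : Type u} [Category.{v} E] [Preadditive E]

/-- The category `E(A, E, B)` of exact sequences `a ↣ x ↠ b` with `a ∈ A` and `b ∈ B`,
realised as the full subcategory of short complexes in `E` whose underlying composable
pair is an exact sequence with outer terms in `A` and `B`: morphisms are commutative
diagrams of such sequences. -/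
def sodSeqProp (S : ExactStructure E) (A B : E → Prop) : ShortComplex E → Prop :=
  fun C => A C.X₁ ∧ B C.X₃ ∧ IsExactSeq S C.f C.g

/-- The functor `e : E(A, E, B) ⥤ E` sending an exact sequence `a ↣ x ↠ b` to its middle
term `x`. -/
def middleTerm (S : ExactStructure E) (A B : E → Prop) :
    ObjectProperty.FullSubcategory (sodSeqProp S A B) ⥤ E :=
  ObjectProperty.ι _ ⋙ ShortComplex.π₂

/-- The source of a kernel of an isomorphism is a zero object. -/
lemma isZero_of_isKernelι_of_isIso {k x y : E} {ι : k ⟶ x} {f : x ⟶ y}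
    (h : IsKernelι ι f) (hf : IsIso f) : IsZero k := by
  obtain ⟨w, ⟨hl⟩⟩ := h
  have hι : ι = 0 := by
    rw [← Category.comp_id ι, ← IsIso.hom_inv_id f, ← Category.assoc, w, zero_comp]
  rw [IsZero.iff_id_eq_zero]
  apply Fork.IsLimit.hom_ext hl
  simp [hι]

/-- The target of a cokernel of an isomorphism is a zero object. -/
lemma isZero_of_isCokernelπ_of_isIso {x y c : E} {f : x ⟶ y} {π : y ⟶ c}
    (h : IsCokernelπ f π) (hf : IsIso f) : IsZero c := by
  obtain ⟨w, ⟨hc⟩⟩ := h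
  have hπ : π = 0 := by
    rw [← Category.id_comp π, ← IsIso.inv_hom_id f, Category.assoc, w, comp_zero]
  rw [IsZero.iff_id_eq_zero]
  apply Cofork.IsColimit.hom_ext hc
  simp [hπ]

/-- Let `E` be an exact category with extension-closed full
subcategories `A` and `B`, together with exact functors `p : E ⥤ A`, `q : E ⥤ B` and a
natural exact sequence `p(x) ↣ x ↠ q(x)` whose inclusion is the counit of an adjunction
`incl ⊣ p` and whose projection is the unit of an adjunction `q ⊣ incl`.  Then the
functor `e : E(A, E, B) ⥤ E`, `(a ↣ x ↠ b) ↦ x`, is an equivalence of categories. -/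
theorem middleTerm_isEquivalence
    (S : ExactStructure E) (A B : E → Prop)
    (hA₀ : ∃ z : E, IsZero z ∧ A z)
    (hAext : ∀ {u y w : E} (i : u ⟶ y) (π : y ⟶ w), IsExactSeq S i π → A u → A w → A y)
    (hB₀ : ∃ z : E, IsZero z ∧ B z)
    (hBext : ∀ {u y w : E} (i : u ⟶ y) (π : y ⟶ w), IsExactSeq S i π → B u → B w → B y)
    (p : E ⥤ ObjectProperty.FullSubcategory A) (adjA : ObjectProperty.ι A ⊣ p)
    (q : E ⥤ ObjectProperty.FullSubcategory B) (adjB : q ⊣ ObjectProperty.ι B)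
    (hseq : ∀ x : E, IsExactSeq S (adjA.counit.app x) (adjB.unit.app x))
    (hp_zero : ∀ x : E, IsZero x → IsZero ((p ⋙ ObjectProperty.ι A).obj x))
    (hp_exact : ∀ {x y z : E} (i : x ⟶ y) (π : y ⟶ z), IsExactSeq S i π →
      IsExactSeq S ((p ⋙ ObjectProperty.ι A).map i)
        ((p ⋙ ObjectProperty.ι A).map π))
    (hq_zero : ∀ x : E, IsZero x → IsZero ((q ⋙ ObjectProperty.ι B).obj x))
    (hq_exact : ∀ {x y z : E} (i : x ⟶ y) (π : y ⟶ z), IsExactSeq S i π →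
      IsExactSeq S ((q ⋙ ObjectProperty.ι B).map i)
        ((q ⋙ ObjectProperty.ι B).map π)) :
    (middleTerm S A B).IsEquivalence := by
  -- The counit of `adjA` is an isomorphism at objects of `A`.
  have hcounit_iso : ∀ (a : E), A a → IsIso (adjA.counit.app a) := fun a ha =>
    adjA.isIso_counit_app_of_iso (X := a) (Y := ⟨a, ha⟩) (Iso.refl _)
  -- The unit of `adjB` is an isomorphism at objects of `B`.
  have hunit_iso : ∀ (b : E), B b → IsIso (adjB.unit.app b) := fun b hb =>
    adjB.isIso_unit_app_of_iso (X := ⟨b, hb⟩) (Y := b) (Iso.refl _)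
  -- `p(b)` is zero for `b ∈ B`.
  have hpB_zero : ∀ (b : E), B b → IsZero ((p ⋙ ObjectProperty.ι A).obj b) := by
    intro b hb
    exact isZero_of_isKernelι_of_isIso (hseq b).2.2.1 (hunit_iso b hb)
  -- Key lemma: any morphism from an object of `A` to an object of `B` is zero.
  have key : ∀ {a b : E}, A a → B b → ∀ f : a ⟶ b, f = 0 := by
    intro a b ha hb f
    have hnat : adjA.counit.app a ≫ f =
        (p ⋙ ObjectProperty.ι A).map f ≫ adjA.counit.app b :=
      (adjA.counit.naturality f).symm
    have hmap : (p ⋙ ObjectProperty.ι A).map f = 0 :=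
      (hpB_zero b hb).eq_of_tgt _ _
    haveI := hcounit_iso a ha
    calc f = inv (adjA.counit.app a) ≫ (adjA.counit.app a ≫ f) := by simp
    _ = inv (adjA.counit.app a) ≫
          ((p ⋙ ObjectProperty.ι A).map f ≫ adjA.counit.app b) := by rw [hnat]
    _ = 0 := by rw [hmap, zero_comp, comp_zero]
  haveI hfaithful : (middleTerm S A B).Faithful := by
    constructor
    intro C D φ ψ h
    obtain ⟨-, -, hDker, -⟩ := D.2.2.2
    obtain ⟨-, -, -, hCcoker⟩ := C.2.2.2
    obtain ⟨wD, ⟨hDk⟩⟩ := id hDker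
    obtain ⟨wC, ⟨hCc⟩⟩ := id hCcoker
    have h2 : φ.hom.τ₂ = ψ.hom.τ₂ := h
    have monoDf : Mono D.1.f := by
      constructor
      intro Z u v huv
      apply Fork.IsLimit.hom_ext hDk
      simpa using huv
    have epiCg : Epi C.1.g := by
      constructor
      intro Z u v huv
      apply Cofork.IsColimit.hom_ext hCc
      simpa using huv
    apply ObjectProperty.hom_ext
    apply ShortComplex.hom_ext
    · rw [← cancel_mono D.1.f]
      rw [φ.hom.comm₁₂, ψ.hom.comm₁₂, h2]
    · exact h2
    · rw [← cancel_epi C.1.g]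
      rw [← φ.hom.comm₂₃, ← ψ.hom.comm₂₃, h2]
  haveI hfull : (middleTerm S A B).Full := by
    constructor
    intro C D φ
    change C.1.X₂ ⟶ D.1.X₂ at φ
    obtain ⟨hCA, hCB, hC⟩ := C.2
    obtain ⟨hDA, hDB, hD⟩ := D.2
    obtain ⟨wD, ⟨hDk⟩⟩ := hD.2.2.1
    obtain ⟨wC, ⟨hCc⟩⟩ := hC.2.2.2
    have hz : C.1.f ≫ φ ≫ D.1.g = 0 := key hCA hDB _
    obtain ⟨τ₁, hτ₁⟩ := KernelFork.IsLimit.lift' hDk (C.1.f ≫ φ)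
      (by rw [Category.assoc]; exact hz)
    obtain ⟨τ₃, hτ₃⟩ := CokernelCofork.IsColimit.desc' hCc (φ ≫ D.1.g) hz
    refine ⟨ObjectProperty.homMk ⟨τ₁, φ, τ₃, by simpa using hτ₁, by simpa using hτ₃.symm⟩, rfl⟩
  haveI hess : (middleTerm S A B).EssSurj := by
    constructor
    intro x
    obtain ⟨w, -⟩ := (hseq x).2.2.1
    exact ⟨⟨ShortComplex.mk (adjA.counit.app x) (adjB.unit.app x) w,
      (p.obj x).2, (q.obj x).2, hseq x⟩, ⟨Iso.refl x⟩⟩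
  exact ⟨hfaithful, hfull, hess⟩

end ExactPaper
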